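/- Let l ≥ 1, n ≥ 1, let |·| be a norm on ℂ^n, and let T be a power bounded linear operator on (ℂ^n, |·|) having n distinct eigenvalues λ_1, …, λ_n, all in the open unit disc 𝔻. Let λ ∈ ℂ with |λ| > 1, and let f(z) = ∑_{k≥0} a_k z^k be a function with ∑_{k≥0} |a_k| < ∞ satisfying f(λ_j) = 1/(λ−λ_j)^l for every j = 1, …, n. Then ‖(λI − T)^{−l}‖ ≤ P(T) · ∑_{k≥0} |a_k|. -/

import Mathlib

/-- For a power bounded operator `T` on `(ℂⁿ, |·|)` with `n` distinct
eigenvalues in the open unit disc, if `f(z) = ∑ aₖ zᵏ` has absolutely summable coefficients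
and interpolates `1/(λ - λⱼ)ˡ` at each eigenvalue `λⱼ`, then
`‖(λI - T)⁻ˡ‖ ≤ P(T) · ∑ |aₖ|`. An arbitrary norm on `ℂⁿ` is modeled by an
`n`-dimensional complex normed space `E`. -/
theorem iterated_resolvent_le_wiener_interpolation
    (l n : ℕ) (hl : 1 ≤ l) (hn : 1 ≤ n)
    (E : Type) [NormedAddCommGroup E] [NormedSpace ℂ E]
    (hdim : Module.finrank ℂ E = n)
    (T : E →L[ℂ] E)
    (hpb : ∃ C : ℝ, ∀ k : ℕ, ‖T ^ k‖ ≤ C)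
    (lam : Fin n → ℂ) (hinj : Function.Injective lam)
    (hspec : spectrum ℂ T = Set.range lam)
    (hmod : ∀ j, ‖lam j‖ < 1)
    (μ : ℂ) (hμ : 1 < ‖μ‖)
    (a : ℕ → ℂ) (ha : Summable fun k => ‖a k‖)
    (hinterp : ∀ j, ∑' k : ℕ, a k * (lam j) ^ k = 1 / (μ - lam j) ^ l) :
    ‖(Ring.inverse (algebraMap ℂ (E →L[ℂ] E) μ - T)) ^ l‖
      ≤ (⨆ k : ℕ, ‖T ^ k‖) * ∑' k : ℕ, ‖a k‖ := by
  haveI : FiniteDimensional ℂ E := Module.finite_of_finrank_pos (by omega)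
  haveI : CompleteSpace E := FiniteDimensional.complete ℂ E
  haveI : Nonempty (Fin n) := ⟨⟨0, by omega⟩⟩
  obtain ⟨C, hC⟩ := hpb
  set P : ℝ := ⨆ k : ℕ, ‖T ^ k‖ with hPdef
  have hbdd : BddAbove (Set.range fun k : ℕ => ‖T ^ k‖) :=
    ⟨C, by rintro x ⟨k, rfl⟩; exact hC k⟩
  have hPk : ∀ k : ℕ, ‖T ^ k‖ ≤ P := fun k => le_ciSup hbdd k
  have hsumnorm : Summable (fun k : ℕ => ‖a k‖ * P) := ha.mul_right P
  have hterm : ∀ k : ℕ, ‖a k • T ^ k‖ ≤ ‖a k‖ * P := fun k => by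
    calc ‖a k • T ^ k‖ = ‖a k‖ * ‖T ^ k‖ := by
          rw [show ‖a k‖ = ‖a k‖ from rfl]
          exact norm_smul (a k) (T ^ k)
      _ ≤ ‖a k‖ * P :=
          mul_le_mul_of_nonneg_left (hPk k) (norm_nonneg _)
  have hnorms : Summable (fun k : ℕ => ‖a k • T ^ k‖) :=
    Summable.of_nonneg_of_le (fun k => norm_nonneg _) hterm hsumnorm
  have hsum : Summable (fun k : ℕ => a k • T ^ k) := hnorms.of_norm
  set S : E →L[ℂ] E := ∑' k : ℕ, a k • T ^ k with hSdef
  set X : E →L[ℂ] E := algebraMap ℂ (E →L[ℂ] E) μ - T with hXdef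
  -- μ is not an eigenvalue, so X is a unit
  have hne : ∀ j, μ - lam j ≠ 0 := fun j =>
    sub_ne_zero.mpr (fun h => absurd (h ▸ hmod j) (not_lt.mpr hμ.le))
  have hXunit : IsUnit X := by
    by_contra h
    have : μ ∈ spectrum ℂ T := spectrum.mem_iff.mpr h
    rw [hspec] at this
    obtain ⟨j, hj⟩ := this
    exact hne j (by rw [hj, sub_self])
  -- eigenvectors
  have hev : ∀ j, ∃ w : E, w ≠ 0 ∧ T w = lam j • w := by
    intro j
    have hj : lam j ∈ spectrum ℂ T := hspec ▸ ⟨j, rfl⟩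
    have h : ¬ IsUnit (algebraMap ℂ (E →L[ℂ] E) (lam j) - T) := spectrum.mem_iff.mp hj
    rw [ContinuousLinearMap.isUnit_iff_bijective] at h
    have hni : ¬ Function.Injective (algebraMap ℂ (E →L[ℂ] E) (lam j) - T) := by
      intro hi
      exact h ⟨hi, LinearMap.injective_iff_surjective.mp hi⟩
    rw [Function.not_injective_iff] at hni
    obtain ⟨x, y, hxy, hxyne⟩ := hni
    refine ⟨x - y, sub_ne_zero.mpr hxyne, ?_⟩
    have : (algebraMap ℂ (E →L[ℂ] E) (lam j) - T) (x - y) = 0 := by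
      simp only [map_sub, hxy, sub_self]
    simp only [ContinuousLinearMap.sub_apply, sub_eq_zero,
      ContinuousLinearMap.algebraMap_apply] at this
    exact this.symm
  choose v hv0 hvT using hev
  have hli : LinearIndependent ℂ v :=
    Module.End.eigenvectors_linearIndependent' (T : E →ₗ[ℂ] E) lam hinj v
      (fun j => ⟨Module.End.mem_eigenspace_iff.mpr (hvT j), hv0 j⟩)
  have hcard : Fintype.card (Fin n) = Module.finrank ℂ E := by simp [hdim]
  let b : Module.Basis (Fin n) ℂ E := basisOfLinearIndependentOfCardEqFinrank hli hcard
  have hb : ∀ j, b j = v j := fun j => by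
    simp [b, coe_basisOfLinearIndependentOfCardEqFinrank]
  -- action of powers of T on eigenvectors
  have hTk : ∀ (j) (k : ℕ), (T ^ k) (v j) = (lam j) ^ k • v j := by
    intro j k
    induction k with
    | zero => simp
    | succ m ih =>
      rw [pow_succ', ContinuousLinearMap.mul_apply, ih, map_smul, hvT, smul_smul,
        pow_succ, mul_comm]
  have hXl : ∀ (m : ℕ) (j), (X ^ m) (v j) = (μ - lam j) ^ m • v j := by
    intro m j
    induction m with
    | zero => simp
    | succ m ih =>
      rw [pow_succ', ContinuousLinearMap.mul_apply, ih, map_smul]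
      have hXv : X (v j) = (μ - lam j) • v j := by
        rw [hXdef]
        simp only [ContinuousLinearMap.sub_apply, ContinuousLinearMap.algebraMap_apply, hvT]
        rw [← sub_smul]
      rw [hXv, smul_smul, pow_succ, mul_comm]
  -- action of S on eigenvectors
  have hsumj : ∀ j, Summable (fun k : ℕ => a k * (lam j) ^ k) := by
    intro j
    apply Summable.of_norm
    apply Summable.of_nonneg_of_le (fun k => norm_nonneg _) (fun k => ?_) ha
    rw [norm_mul, norm_pow]
    calc ‖a k‖ * ‖lam j‖ ^ k
        ≤ ‖a k‖ * 1 ^ k := by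
          exact mul_le_mul_of_nonneg_left (pow_le_pow_left₀ (norm_nonneg _)
            (hmod j).le k) (norm_nonneg _)
      _ = ‖a k‖ := by rw [one_pow, mul_one]
  have hS : ∀ j, S (v j) = (∑' k : ℕ, a k * (lam j) ^ k) • v j := by
    intro j
    have h1 : S (v j) = ∑' k : ℕ, (a k • T ^ k) (v j) :=
      (ContinuousLinearMap.apply ℂ E (v j)).map_tsum hsum
    rw [h1]
    have h2 : ∀ k : ℕ, (a k • T ^ k) (v j) = (a k * (lam j) ^ k) • v j := by
      intro k
      rw [ContinuousLinearMap.smul_apply, hTk, smul_smul]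
    rw [tsum_congr h2, Summable.tsum_smul_const (hsumj j)]
  -- key identity: S * X^l = 1
  have key : S * X ^ l = 1 := by
    apply ContinuousLinearMap.coe_injective
    apply Module.Basis.ext b
    intro j
    rw [hb j]
    show (S * X ^ l) (v j) = (1 : E →L[ℂ] E) (v j)
    rw [ContinuousLinearMap.mul_apply, hXl l j, map_smul, hS, hinterp, smul_smul,
      ContinuousLinearMap.one_apply]
    rw [mul_one_div, div_self (pow_ne_zero l (hne j)), one_smul]
  -- identify Ring.inverse X ^ l with S
  have hXlu : IsUnit (X ^ l) := hXunit.pow l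
  have hinv : Ring.inverse X ^ l = S := by
    rw [Ring.inverse_pow]
    calc Ring.inverse (X ^ l) = 1 * Ring.inverse (X ^ l) := (one_mul _).symm
      _ = S * X ^ l * Ring.inverse (X ^ l) := by rw [key]
      _ = S * (X ^ l * Ring.inverse (X ^ l)) := mul_assoc _ _ _
      _ = S := by rw [Ring.mul_inverse_cancel _ hXlu, mul_one]
  rw [hinv]
  calc ‖S‖ ≤ ∑' k : ℕ, ‖a k • T ^ k‖ := norm_tsum_le_tsum_norm hnorms
    _ ≤ ∑' k : ℕ, ‖a k‖ * P := Summable.tsum_le_tsum hterm hnorms hsumnorm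
    _ = (∑' k : ℕ, ‖a k‖) * P := tsum_mul_right
    _ = P * ∑' k : ℕ, ‖a k‖ := mul_comm _ _
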